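/- Fix the data of a generalized Bott manifold and line bundle, i.e. integers {c_{i,j}^{(k)}} and {ℓ_j} as below. In the group ring ℤ[ℤ^{N+1}] one has D_1 D_2 ⋯ D_m(λ^{e_{m+1}}) = Σ_{x ∈ C ∩ ℤ^N} ρ(x) · λ^{x + e_{m+1}}, where each lattice point x = (x_{i,k}) ∈ ℤ^N is identified with Σ_{i,k} x_{i,k} e_{i,k} ∈ ℤ^{N+1}; in particular the sum on the right has only finitely many nonzero terms. (This is the combinatorial content of the paper's two main theorems: the Demazure-type character D_1⋯D_m(λ^{e_{m+1}}) equals the signed enumeration, by the density function, of the lattice points of the generalized twisted cube.) -/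

import Mathlib

/-!
Generalized Bott manifold data: `m ≥ 1`, block sizes `n : Fin m → ℕ` (each ≥ 1),
integers `ℓ : Fin m → ℤ` and `c i j k` (used only for `i < j`).
The lattice `ℤ^{N+1}` is realized as functions `((Σ i, Fin (n i)) ⊕ Unit) → ℤ`,
with standard basis `E p`; `E (Sum.inr ())` is `e_{m+1}`.
-/

noncomputable section

namespace GB

variable (m : ℕ) (n : Fin m → ℕ)

/-- The double-index set for the coordinates `x_{i,k}`, `1 ≤ i ≤ m`, `1 ≤ k ≤ n_i`. -/
abbrev J : Type := Σ i : Fin m, Fin (n i)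

/-- The lattice `ℤ^{N+1}`. -/
abbrev L : Type := (J m n ⊕ Unit) → ℤ

/-- Standard basis vector of `ℤ^{N+1}`. -/
def E (p : J m n ⊕ Unit) : L m n := fun q => if q = p then 1 else 0

/-- The basis element `λ^μ` of the group ring `ℤ[ℤ^{N+1}]`. -/
def lam (μ : L m n) : AddMonoidAlgebra ℤ (L m n) := AddMonoidAlgebra.single μ 1

/-- `⟨x, e_i⟩ = Σ_k x_k e_{i,k}`. -/
def emb (i : Fin m) (z : Fin (n i) → ℤ) : L m n :=
  ∑ k : Fin (n i), z k • E m n (Sum.inl ⟨i, k⟩)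

variable (ℓ : Fin m → ℤ) (c : (i j : Fin m) → Fin (n j) → ℤ)

/-- `k_i(μ) = ℓ_i + Σ_{j=i+1}^m Σ_{k=1}^{n_j} c_{i,j}^{(k)} μ_{j,k}`. -/
def kfun (i : Fin m) (μ : L m n) : ℤ :=
  ℓ i + ∑ j : Fin m, ∑ k : Fin (n j), if i < j then c i j k * μ (Sum.inl ⟨j, k⟩) else 0

/-- `Δ⁻_{n,r} = {z ∈ ℤ_{≤0}^n : z_1 + ⋯ + z_n = -r}`. -/
def DeltaMinus (nn : ℕ) (r : ℤ) : Set (Fin nn → ℤ) :=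
  {z | (∀ j, z j ≤ 0) ∧ ∑ j, z j = -r}

/-- `Δ⁺_{n,r} = {z ∈ ℤ_{>0}^n : z_1 + ⋯ + z_n = r - 1}`. -/
def DeltaPlus (nn : ℕ) (r : ℤ) : Set (Fin nn → ℤ) :=
  {z | (∀ j, 0 < z j) ∧ ∑ j, z j = r - 1}

/-- The value of the operator `D_i` on the basis element `λ^μ`. -/
def Dsingle (i : Fin m) (μ : L m n) : AddMonoidAlgebra ℤ (L m n) :=
  if 0 ≤ kfun m n ℓ c i μ then
    ∑ r ∈ Finset.Icc (0 : ℤ) (kfun m n ℓ c i μ),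
      ∑ᶠ z ∈ DeltaMinus (n i) r, lam m n (μ + emb m n i z)
  else if -(n i : ℤ) ≤ kfun m n ℓ c i μ then 0
  else
    ∑ r ∈ Finset.Icc ((n i : ℤ) + 1) (-(kfun m n ℓ c i μ)),
      ∑ᶠ z ∈ DeltaPlus (n i) r, ((-1) ^ (n i) : ℤ) • lam m n (μ + emb m n i z)

/-- The ℤ-linear operator `D_i` on `ℤ[ℤ^{N+1}]`, extending `λ^μ ↦ Dsingle i μ`. -/
def Dop (i : Fin m) (f : AddMonoidAlgebra ℤ (L m n)) : AddMonoidAlgebra ℤ (L m n) :=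
  Finsupp.sum f.coeff fun μ a => a • Dsingle m n ℓ c i μ

/-- `A_i(x)`; for `i = m` the inner sum is empty, so `A_m(x) = -ℓ_m`. -/
def A (x : J m n → ℝ) (i : Fin m) : ℝ :=
  -(ℓ i + ∑ j : Fin m, ∑ k : Fin (n j), if i < j then (c i j k : ℝ) * x ⟨j, k⟩ else 0)

/-- The generalized twisted cube `C ⊆ ℝ^N`. -/
def C : Set (J m n → ℝ) :=
  {x | ∀ i : Fin m,
    (A m n ℓ c x i ≤ ∑ k, x ⟨i, k⟩ ∧ (∑ k, x ⟨i, k⟩) ≤ 0 ∧ ∀ k, x ⟨i, k⟩ ≤ 0) ∨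
    (0 < ∑ k, x ⟨i, k⟩ ∧ (∑ k, x ⟨i, k⟩) < A m n ℓ c x i ∧ ∀ k, 0 < x ⟨i, k⟩)}

/-- `sgn(t) = 1` if `t > 0`, `-1` if `t ≤ 0` (real argument). -/
def sgnR (t : ℝ) : ℤ := if 0 < t then 1 else -1

/-- `sgn(t) = 1` if `t > 0`, `-1` if `t ≤ 0` (integer argument). -/
def sgnZ (t : ℤ) : ℤ := if 0 < t then 1 else -1

open Classical in
/-- The density function `ρ` of the generalized twisted cube. -/
def rho (x : J m n → ℝ) : ℤ :=
  if x ∈ C m n ℓ c then (-1) ^ (∑ i, n i) * ∏ p : J m n, sgnR (x p) else 0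

end GB

end

noncomputable section
namespace GBAux
open GB

variable (m : ℕ) (n : Fin m → ℕ) (ℓ : Fin m → ℤ) (c : (i j : Fin m) → Fin (n j) → ℤ)

/-! ### Basic lattice lemmas -/

def toL (x : J m n → ℤ) : L m n :=
  E m n (Sum.inr ()) + ∑ p : J m n, x p • E m n (Sum.inl p)

lemma toL_apply_inl (x : J m n → ℤ) (q : J m n) : toL m n x (Sum.inl q) = x q := by
  simp only [toL, Pi.add_apply, Finset.sum_apply, Pi.smul_apply, E, smul_eq_mul]
  rw [if_neg (by simp)]
  rw [Finset.sum_eq_single q (by intro b _ hb; rw [if_neg (by simpa using (Ne.symm hb)), mul_zero])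
    (by simp)]
  simp

def Kf (i : Fin m) (x : J m n → ℤ) : ℤ :=
  ℓ i + ∑ j : Fin m, ∑ k : Fin (n j), if i < j then c i j k * x ⟨j, k⟩ else 0

lemma kfun_toL (i : Fin m) (x : J m n → ℤ) :
    kfun m n ℓ c i (toL m n x) = Kf m n ℓ c i x := by
  simp only [kfun, Kf, toL_apply_inl]

def embJ (i : Fin m) (z : Fin (n i) → ℤ) : J m n → ℤ :=
  fun p => if h : p.1 = i then z ⟨p.2.val, h ▸ p.2.isLt⟩ else 0

lemma embJ_same (i : Fin m) (z : Fin (n i) → ℤ) (k : Fin (n i)) :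
    embJ m n i z ⟨i, k⟩ = z k := by
  simp [embJ]

lemma embJ_other (i : Fin m) (z : Fin (n i) → ℤ) (p : J m n) (h : p.1 ≠ i) :
    embJ m n i z p = 0 := dif_neg h

lemma sum_embJ_smul (i : Fin m) (z : Fin (n i) → ℤ) :
    ∑ p : J m n, embJ m n i z p • E m n (Sum.inl p) = emb m n i z := by
  rw [← Finset.univ_sigma_univ, Finset.sum_sigma]
  rw [Finset.sum_eq_single i ?h1 (by simp)]
  · simp only [embJ_same]; rfl
  · intro j _ hj
    apply Finset.sum_eq_zero
    intro k _
    rw [embJ_other m n i z ⟨j, k⟩ hj, zero_smul]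

lemma toL_add_embJ (i : Fin m) (x : J m n → ℤ) (z : Fin (n i) → ℤ) :
    toL m n (x + embJ m n i z) = toL m n x + emb m n i z := by
  simp only [toL, Pi.add_apply, add_smul, Finset.sum_add_distrib, sum_embJ_smul]
  abel

/-! ### Sum bounds and finiteness -/

lemma sum_le_of_nonpos {nn : ℕ} (z : Fin nn → ℤ) (k : Fin nn) (h : ∀ j, z j ≤ 0) :
    ∑ j, z j ≤ z k := by
  rw [← Finset.add_sum_erase _ _ (Finset.mem_univ k)]
  have : ∑ j ∈ Finset.univ.erase k, z j ≤ 0 := Finset.sum_nonpos (fun j _ => h j)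
  omega

lemma le_sum_of_pos {nn : ℕ} (z : Fin nn → ℤ) (k : Fin nn) (h : ∀ j, 0 < z j) :
    z k ≤ ∑ j, z j := by
  rw [← Finset.add_sum_erase _ _ (Finset.mem_univ k)]
  have : 0 ≤ ∑ j ∈ Finset.univ.erase k, z j := Finset.sum_nonneg (fun j _ => (h j).le)
  omega

lemma card_le_sum_of_pos {nn : ℕ} (z : Fin nn → ℤ) (h : ∀ j, 0 < z j) :
    (nn : ℤ) ≤ ∑ j, z j := by
  calc (nn : ℤ) = ∑ _j : Fin nn, 1 := by simp
  _ ≤ ∑ j, z j := Finset.sum_le_sum (fun j _ => h j)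

lemma sum_nonpos_of_nonpos {nn : ℕ} (z : Fin nn → ℤ) (h : ∀ j, z j ≤ 0) :
    ∑ j, z j ≤ 0 := Finset.sum_nonpos (fun j _ => h j)

lemma finite_of_bounded {nn : ℕ} (s : Set (Fin nn → ℤ)) (B : ℤ)
    (hs : ∀ z ∈ s, ∀ k, z k ∈ Set.Icc (-B) B) : s.Finite := by
  have : s ⊆ Set.pi Set.univ (fun _ : Fin nn => Set.Icc (-B) B) := by
    intro z hz k _; exact hs z hz k
  exact Set.Finite.subset (Set.Finite.pi (fun _ => Set.finite_Icc _ _)) this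

lemma DeltaMinus_finite (nn : ℕ) (r : ℤ) : (DeltaMinus nn r).Finite := by
  apply finite_of_bounded _ (|r|)
  rintro z ⟨h1, h2⟩ k
  have := sum_le_of_nonpos z k h1
  have := neg_abs_le r
  have := le_abs_self r
  have := h1 k
  constructor <;> omega

lemma DeltaPlus_finite (nn : ℕ) (r : ℤ) : (DeltaPlus nn r).Finite := by
  apply finite_of_bounded _ (|r| + 1)
  rintro z ⟨h1, h2⟩ k
  have := le_sum_of_pos z k h1
  have := neg_abs_le r
  have := le_abs_self r
  have := h1 k
  constructor <;> omega

/-! ### The combinatorial sets -/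

def Zset (i : Fin m) (x : J m n → ℤ) : Set (Fin (n i) → ℤ) :=
  {z | ((∀ k, z k ≤ 0) ∧ -(Kf m n ℓ c i x) ≤ ∑ k, z k) ∨
       ((∀ k, 0 < z k) ∧ ∑ k, z k ≤ -(Kf m n ℓ c i x) - 1)}

lemma Zset_finite (i : Fin m) (x : J m n → ℤ) : (Zset m n ℓ c i x).Finite := by
  apply finite_of_bounded _ (|Kf m n ℓ c i x| + 1)
  have := neg_abs_le (Kf m n ℓ c i x)
  have := le_abs_self (Kf m n ℓ c i x)
  rintro z (⟨h1, h2⟩ | ⟨h1, h2⟩) k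
  · have := sum_le_of_nonpos z k h1
    have := h1 k
    constructor <;> omega
  · have := le_sum_of_pos z k h1
    have := h1 k
    constructor <;> omega

def blockCond (i : Fin m) (x : J m n → ℤ) : Prop :=
  ((∀ k, x ⟨i, k⟩ ≤ 0) ∧ -(Kf m n ℓ c i x) ≤ ∑ k, x ⟨i, k⟩) ∨
  ((∀ k, 0 < x ⟨i, k⟩) ∧ ∑ k, x ⟨i, k⟩ ≤ -(Kf m n ℓ c i x) - 1)

def S (t : ℕ) : Set (J m n → ℤ) :=
  {x | (∀ p : J m n, (p.1 : ℕ) < t → x p = 0) ∧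
       ∀ i : Fin m, t ≤ (i : ℕ) → blockCond m n ℓ c i x}

def W (t : ℕ) (x : J m n → ℤ) : ℤ :=
  ∏ j : Fin m, if t ≤ (j : ℕ) ∧ ∀ k, 0 < x ⟨j, k⟩ then (-1 : ℤ) ^ (n j) else 1

/-! ### Stability under adding a block -/

lemma add_embJ_apply_ne (i j : Fin m) (h : j ≠ i) (x : J m n → ℤ)
    (z : Fin (n i) → ℤ) (k : Fin (n j)) :
    (x + embJ m n i z) ⟨j, k⟩ = x ⟨j, k⟩ := by
  rw [Pi.add_apply, embJ_other m n i z ⟨j, k⟩ h, add_zero]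

lemma add_embJ_apply_same (i : Fin m) (x : J m n → ℤ) (z : Fin (n i) → ℤ) (k : Fin (n i)) :
    (x + embJ m n i z) ⟨i, k⟩ = x ⟨i, k⟩ + z k := by
  rw [Pi.add_apply, embJ_same]

lemma Kf_add_embJ (i j : Fin m) (h : ¬ j < i) (x : J m n → ℤ) (z : Fin (n i) → ℤ) :
    Kf m n ℓ c j (x + embJ m n i z) = Kf m n ℓ c j x := by
  unfold Kf
  congr 1
  refine Finset.sum_congr rfl fun j' _ => Finset.sum_congr rfl fun k _ => ?_
  by_cases h' : j < j'
  · rw [if_pos h', if_pos h', Pi.add_apply,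
      embJ_other m n i z ⟨j', k⟩ (by rintro rfl; exact h h'), add_zero]
  · rw [if_neg h', if_neg h']

lemma blockCond_congr (j : Fin m) {x x' : J m n → ℤ}
    (hK : Kf m n ℓ c j x' = Kf m n ℓ c j x) (hc : ∀ k, x' ⟨j, k⟩ = x ⟨j, k⟩) :
    blockCond m n ℓ c j x' ↔ blockCond m n ℓ c j x := by
  unfold blockCond
  simp only [hc, hK]

lemma blockCond_add_embJ_self (i : Fin m) (x : J m n → ℤ) (z : Fin (n i) → ℤ)
    (h0 : ∀ k, x ⟨i, k⟩ = 0) :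
    blockCond m n ℓ c i (x + embJ m n i z) ↔ z ∈ Zset m n ℓ c i x := by
  have hK := Kf_add_embJ m n ℓ c i i (lt_irrefl i) x z
  have hc : ∀ k, (x + embJ m n i z) ⟨i, k⟩ = z k := by
    intro k; rw [add_embJ_apply_same, h0, zero_add]
  unfold blockCond Zset
  simp only [Set.mem_setOf_eq, hc, hK]


/-! ### Step: decomposition of `S t` -/

section Step

variable (t : ℕ) (ht : t < m)

lemma mem_S_step_fwd {x : J m n → ℤ} (hx : x ∈ S m n ℓ c (t + 1))
    {z : Fin (n ⟨t, ht⟩) → ℤ} (hz : z ∈ Zset m n ℓ c ⟨t, ht⟩ x) :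
    (x + embJ m n ⟨t, ht⟩ z) ∈ S m n ℓ c t := by
  obtain ⟨hx0, hxb⟩ := hx
  constructor
  · rintro ⟨j, k⟩ hjk
    have hji : j ≠ (⟨t, ht⟩ : Fin m) := by
      intro e; subst e; simp at hjk
    rw [add_embJ_apply_ne m n ⟨t, ht⟩ j hji x z k]
    exact hx0 ⟨j, k⟩ (by simp at hjk ⊢; omega)
  · intro j hj
    by_cases hji : j = (⟨t, ht⟩ : Fin m)
    · subst hji
      rw [blockCond_add_embJ_self m n ℓ c _ x z (fun k => hx0 ⟨_, k⟩ (by simp))]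
      exact hz
    · have hvj : (j : ℕ) ≠ t := fun e => hji (Fin.ext e)
      rw [blockCond_congr m n ℓ c j
        (Kf_add_embJ m n ℓ c ⟨t, ht⟩ j (by simp only [Fin.lt_def]; simp; omega) x z)
        (fun k => add_embJ_apply_ne m n ⟨t, ht⟩ j hji x z k)]
      exact hxb j (by omega)

def truncB (y : J m n → ℤ) : J m n → ℤ :=
  y + embJ m n ⟨t, ht⟩ (fun k => -(y ⟨⟨t, ht⟩, k⟩))

def blockB (y : J m n → ℤ) : Fin (n ⟨t, ht⟩) → ℤ := fun k => y ⟨⟨t, ht⟩, k⟩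

lemma truncB_apply_same (y : J m n → ℤ) (k : Fin (n ⟨t, ht⟩)) :
    truncB m n t ht y ⟨⟨t, ht⟩, k⟩ = 0 := by
  unfold truncB
  rw [add_embJ_apply_same]; omega

lemma truncB_apply_ne (y : J m n → ℤ) {j : Fin m} (h : j ≠ ⟨t, ht⟩) (k : Fin (n j)) :
    truncB m n t ht y ⟨j, k⟩ = y ⟨j, k⟩ :=
  add_embJ_apply_ne m n ⟨t, ht⟩ j h y _ k

lemma trunc_add_block (y : J m n → ℤ) :
    truncB m n t ht y + embJ m n ⟨t, ht⟩ (blockB m n t ht y) = y := by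
  funext p
  obtain ⟨j, k⟩ := p
  by_cases h : j = (⟨t, ht⟩ : Fin m)
  · subst h
    rw [add_embJ_apply_same, truncB_apply_same, zero_add]
    rfl
  · rw [add_embJ_apply_ne m n _ j h _ _ k, truncB_apply_ne m n t ht y h k]

lemma mem_S_step_bwd {y : J m n → ℤ} (hy : y ∈ S m n ℓ c t) :
    truncB m n t ht y ∈ S m n ℓ c (t + 1) ∧
    blockB m n t ht y ∈ Zset m n ℓ c ⟨t, ht⟩ (truncB m n t ht y) := by
  obtain ⟨hy0, hyb⟩ := hy
  have hKi : ∀ j : Fin m, ¬ j < (⟨t, ht⟩ : Fin m) →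
      Kf m n ℓ c j (truncB m n t ht y) = Kf m n ℓ c j y :=
    fun j h => Kf_add_embJ m n ℓ c ⟨t, ht⟩ j h y _
  have hmem : truncB m n t ht y ∈ S m n ℓ c (t + 1) := by
    constructor
    · rintro ⟨j, k⟩ hjk
      by_cases h : j = (⟨t, ht⟩ : Fin m)
      · subst h; exact truncB_apply_same m n t ht y k
      · rw [truncB_apply_ne m n t ht y h k]
        have hvj : (j : ℕ) ≠ t := fun e => h (Fin.ext e)
        exact hy0 ⟨j, k⟩ (by simp at hjk ⊢; omega)
    · intro j hj
      have hji : j ≠ (⟨t, ht⟩ : Fin m) := by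
        intro e; subst e; simp at hj
      rw [blockCond_congr m n ℓ c j
        (hKi j (by simp only [Fin.lt_def]; simp; omega))
        (fun k => truncB_apply_ne m n t ht y hji k)]
      exact hyb j (by omega)
  refine ⟨hmem, ?_⟩
  have hbc := hyb ⟨t, ht⟩ (by simp)
  have hK := hKi ⟨t, ht⟩ (lt_irrefl _)
  unfold blockCond at hbc
  unfold Zset blockB
  simp only [Set.mem_setOf_eq]
  rw [hK]
  exact hbc

lemma trunc_of_add {x : J m n → ℤ} (hx : x ∈ S m n ℓ c (t + 1))
    (z : Fin (n ⟨t, ht⟩) → ℤ) :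
    truncB m n t ht (x + embJ m n ⟨t, ht⟩ z) = x ∧
    blockB m n t ht (x + embJ m n ⟨t, ht⟩ z) = z := by
  have h0 : ∀ k, x ⟨⟨t, ht⟩, k⟩ = 0 := fun k => hx.1 ⟨⟨t, ht⟩, k⟩ (by simp)
  constructor
  · funext p
    obtain ⟨j, k⟩ := p
    by_cases h : j = (⟨t, ht⟩ : Fin m)
    · subst h
      rw [truncB_apply_same, h0 k]
    · rw [truncB_apply_ne m n t ht _ h k, add_embJ_apply_ne m n ⟨t, ht⟩ j h x z k]
  · funext k
    show (x + embJ m n ⟨t, ht⟩ z) ⟨⟨t, ht⟩, k⟩ = z k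
    rw [add_embJ_apply_same, h0, zero_add]

lemma S_finite (ht : t < m) (hfin : (S m n ℓ c (t + 1)).Finite) : (S m n ℓ c t).Finite := by
  have : S m n ℓ c t ⊆
      ⋃ x ∈ S m n ℓ c (t + 1),
        (fun z => x + embJ m n ⟨t, ht⟩ z) '' (Zset m n ℓ c ⟨t, ht⟩ x) := by
    intro y hy
    obtain ⟨h1, h2⟩ := mem_S_step_bwd m n ℓ c t ht hy
    refine Set.mem_biUnion h1 ⟨blockB m n t ht y, h2, ?_⟩
    exact trunc_add_block m n t ht y
  exact Set.Finite.subset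
    (Set.Finite.biUnion hfin (fun x _ => (Zset_finite m n ℓ c ⟨t, ht⟩ x).image _)) this

lemma W_add_embJ {x : J m n → ℤ} (hx : x ∈ S m n ℓ c (t + 1)) (z : Fin (n ⟨t, ht⟩) → ℤ) :
    W m n t (x + embJ m n ⟨t, ht⟩ z) =
      (if ∀ k, 0 < z k then (-1 : ℤ) ^ (n ⟨t, ht⟩) else 1) * W m n (t + 1) x := by
  have h0 : ∀ k, x ⟨⟨t, ht⟩, k⟩ = 0 := fun k => hx.1 ⟨⟨t, ht⟩, k⟩ (by simp)
  have hc : ∀ k, (x + embJ m n ⟨t, ht⟩ z) ⟨⟨t, ht⟩, k⟩ = z k := by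
    intro k; rw [add_embJ_apply_same, h0, zero_add]
  unfold W
  rw [Finset.prod_eq_mul_prod_sdiff_singleton_of_mem (Finset.mem_univ (⟨t, ht⟩ : Fin m))
      (fun j => if t ≤ (j : ℕ) ∧ ∀ k, 0 < (x + embJ m n ⟨t, ht⟩ z) ⟨j, k⟩
        then (-1 : ℤ) ^ (n j) else 1),
    Finset.prod_eq_mul_prod_sdiff_singleton_of_mem (Finset.mem_univ (⟨t, ht⟩ : Fin m))
      (fun j => if t + 1 ≤ (j : ℕ) ∧ ∀ k, 0 < x ⟨j, k⟩ then (-1 : ℤ) ^ (n j) else 1)]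
  have e1 : (if t ≤ ((⟨t, ht⟩ : Fin m) : ℕ) ∧ ∀ k, 0 < (x + embJ m n ⟨t, ht⟩ z) ⟨⟨t, ht⟩, k⟩
      then (-1 : ℤ) ^ (n ⟨t, ht⟩) else 1)
      = (if ∀ k, 0 < z k then (-1 : ℤ) ^ (n ⟨t, ht⟩) else 1) := by
    simp only [hc]
    simp
  have e2 : (if t + 1 ≤ ((⟨t, ht⟩ : Fin m) : ℕ) ∧ ∀ k, 0 < x ⟨⟨t, ht⟩, k⟩
      then (-1 : ℤ) ^ (n ⟨t, ht⟩) else 1) = 1 := by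
    rw [if_neg]
    rintro ⟨h1, -⟩
    exact Nat.not_succ_le_self t h1
  rw [e1, e2, one_mul]
  have e3 : (∏ j ∈ Finset.univ \ {(⟨t, ht⟩ : Fin m)},
        if t ≤ (j : ℕ) ∧ ∀ k, 0 < (x + embJ m n ⟨t, ht⟩ z) ⟨j, k⟩
          then (-1 : ℤ) ^ (n j) else 1)
      = (∏ j ∈ Finset.univ \ {(⟨t, ht⟩ : Fin m)},
        if t + 1 ≤ (j : ℕ) ∧ ∀ k, 0 < x ⟨j, k⟩ then (-1 : ℤ) ^ (n j) else 1) := by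
    apply Finset.prod_congr rfl
    intro j hj
    have hji : j ≠ (⟨t, ht⟩ : Fin m) := by simpa using (Finset.mem_sdiff.mp hj).2
    have hvj : (j : ℕ) ≠ t := fun e => hji (Fin.ext e)
    apply if_congr _ rfl rfl
    constructor
    · rintro ⟨ha, hb⟩
      exact ⟨by omega, fun k => by rw [← add_embJ_apply_ne m n ⟨t, ht⟩ j hji x z k]; exact hb k⟩
    · rintro ⟨ha, hb⟩
      exact ⟨by omega, fun k => by rw [add_embJ_apply_ne m n ⟨t, ht⟩ j hji x z k]; exact hb k⟩
  rw [e3, mul_comm]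

end Step

/-! ### Evaluation of `Dsingle` -/

lemma Dsingle_toL (i : Fin m) (hn1 : 1 ≤ n i) (x : J m n → ℤ) :
    Dsingle m n ℓ c i (toL m n x) =
    ∑ z ∈ (Zset_finite m n ℓ c i x).toFinset,
      (if ∀ k, 0 < z k then (-1 : ℤ) ^ (n i) else 1) • lam m n (toL m n x + emb m n i z) := by
  have hni : (1 : ℤ) ≤ (n i : ℤ) := by exact_mod_cast hn1
  unfold Dsingle
  rw [kfun_toL]
  by_cases h1 : 0 ≤ Kf m n ℓ c i x
  · rw [if_pos h1]
    have hTmem : ∀ z ∈ (Zset_finite m n ℓ c i x).toFinset, ¬(∀ k, 0 < z k) := by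
      intro z hz hpos
      rw [Set.Finite.mem_toFinset] at hz
      rcases hz with ⟨hz1, _⟩ | ⟨_, hz2⟩
      · exact absurd (hz1 ⟨0, hn1⟩) (not_le.mpr (hpos ⟨0, hn1⟩))
      · have := card_le_sum_of_pos z hpos
        omega
    rw [show (∑ z ∈ (Zset_finite m n ℓ c i x).toFinset,
          (if ∀ k, 0 < z k then (-1 : ℤ) ^ (n i) else 1) • lam m n (toL m n x + emb m n i z))
        = ∑ z ∈ (Zset_finite m n ℓ c i x).toFinset, lam m n (toL m n x + emb m n i z) from
      Finset.sum_congr rfl (fun z hz => by rw [if_neg (hTmem z hz), one_smul])]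
    have hmaps : ∀ z ∈ (Zset_finite m n ℓ c i x).toFinset,
        (-∑ k, z k) ∈ Finset.Icc (0 : ℤ) (Kf m n ℓ c i x) := by
      intro z hz
      rw [Set.Finite.mem_toFinset] at hz
      rw [Finset.mem_Icc]
      rcases hz with ⟨hz1, hz2⟩ | ⟨hz1, hz2⟩
      · have := sum_nonpos_of_nonpos z hz1
        omega
      · have := card_le_sum_of_pos z hz1
        omega
    rw [← Finset.sum_fiberwise_of_maps_to hmaps
      (fun z => lam m n (toL m n x + emb m n i z))]
    apply Finset.sum_congr rfl
    intro r hr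
    rw [Finset.mem_Icc] at hr
    rw [finsum_mem_eq_finite_toFinset_sum _ (DeltaMinus_finite (n i) r)]
    apply Finset.sum_congr _ (fun _ _ => rfl)
    ext z
    simp only [Finset.mem_filter, Set.Finite.mem_toFinset, DeltaMinus, Zset,
      Set.mem_setOf_eq]
    constructor
    · rintro ⟨hz1, hz2⟩
      exact ⟨Or.inl ⟨hz1, by omega⟩, by omega⟩
    · rintro ⟨⟨hz1, hz2⟩ | ⟨hz1, hz2⟩, he⟩
      · exact ⟨hz1, by omega⟩
      · have := card_le_sum_of_pos z hz1
        omega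
  · rw [if_neg h1]
    by_cases h2 : -(n i : ℤ) ≤ Kf m n ℓ c i x
    · rw [if_pos h2]
      have hempty : Zset m n ℓ c i x = ∅ := by
        ext z
        simp only [Zset, Set.mem_setOf_eq, Set.mem_empty_iff_false, iff_false]
        rintro (⟨hz1, hz2⟩ | ⟨hz1, hz2⟩)
        · have := sum_nonpos_of_nonpos z hz1
          omega
        · have := card_le_sum_of_pos z hz1
          omega
      rw [show (Zset_finite m n ℓ c i x).toFinset = ∅ from
        Set.Finite.toFinset_eq_empty.mpr hempty, Finset.sum_empty]
    · rw [if_neg h2]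
      push_neg at h2
      have hTpos : ∀ z ∈ (Zset_finite m n ℓ c i x).toFinset, (∀ k, 0 < z k) := by
        intro z hz
        rw [Set.Finite.mem_toFinset] at hz
        rcases hz with ⟨hz1, hz2⟩ | ⟨hz1, hz2⟩
        · have := sum_nonpos_of_nonpos z hz1
          omega
        · exact hz1
      rw [show (∑ z ∈ (Zset_finite m n ℓ c i x).toFinset,
            (if ∀ k, 0 < z k then (-1 : ℤ) ^ (n i) else 1) • lam m n (toL m n x + emb m n i z))
          = ∑ z ∈ (Zset_finite m n ℓ c i x).toFinset,
            ((-1 : ℤ) ^ (n i)) • lam m n (toL m n x + emb m n i z) from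
        Finset.sum_congr rfl (fun z hz => by rw [if_pos (hTpos z hz)])]
      have hmaps : ∀ z ∈ (Zset_finite m n ℓ c i x).toFinset,
          ((∑ k, z k) + 1) ∈ Finset.Icc ((n i : ℤ) + 1) (-(Kf m n ℓ c i x)) := by
        intro z hz
        have hpos := hTpos z hz
        rw [Set.Finite.mem_toFinset] at hz
        rw [Finset.mem_Icc]
        rcases hz with ⟨hz1, hz2⟩ | ⟨hz1, hz2⟩
        · have := sum_nonpos_of_nonpos z hz1
          omega
        · have := card_le_sum_of_pos z hz1
          omega
      rw [← Finset.sum_fiberwise_of_maps_to hmaps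
        (fun z => ((-1 : ℤ) ^ (n i)) • lam m n (toL m n x + emb m n i z))]
      apply Finset.sum_congr rfl
      intro r hr
      rw [Finset.mem_Icc] at hr
      rw [finsum_mem_eq_finite_toFinset_sum _ (DeltaPlus_finite (n i) r)]
      apply Finset.sum_congr _ (fun _ _ => rfl)
      ext z
      simp only [Finset.mem_filter, Set.Finite.mem_toFinset, DeltaPlus, Zset,
        Set.mem_setOf_eq]
      constructor
      · rintro ⟨hz1, hz2⟩
        exact ⟨Or.inr ⟨hz1, by omega⟩, by omega⟩
      · rintro ⟨⟨hz1, hz2⟩ | ⟨hz1, hz2⟩, he⟩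
        · have := sum_nonpos_of_nonpos z hz1
          omega
        · exact ⟨hz1, by omega⟩

/-! ### Linearity of `Dop` -/

lemma Dop_eq_lsum (i : Fin m) (f : AddMonoidAlgebra ℤ (L m n)) :
    Dop m n ℓ c i f =
      (Finsupp.lsum ℤ fun μ => LinearMap.toSpanSingleton ℤ _ (Dsingle m n ℓ c i μ)) f.coeff := rfl

lemma Dop_lam (i : Fin m) (μ : L m n) :
    Dop m n ℓ c i (lam m n μ) = Dsingle m n ℓ c i μ := by
  rw [Dop_eq_lsum]
  unfold lam
  rw [AddMonoidAlgebra.coeff_single, Finsupp.lsum_single]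
  simp

lemma Dop_sum {α : Type*} (i : Fin m) (F : Finset α) (g : α → AddMonoidAlgebra ℤ (L m n)) :
    Dop m n ℓ c i (∑ a ∈ F, g a) = ∑ a ∈ F, Dop m n ℓ c i (g a) := by
  simp only [Dop_eq_lsum, AddMonoidAlgebra.coeff_sum]
  exact map_sum _ _ _

lemma Dop_smul (i : Fin m) (a : ℤ) (f : AddMonoidAlgebra ℤ (L m n)) :
    Dop m n ℓ c i (a • f) = a • Dop m n ℓ c i f := by
  simp only [Dop_eq_lsum, AddMonoidAlgebra.coeff_smul]
  exact map_smul _ _ _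

/-! ### The inductive step for the composite operator -/

lemma step_sum (hn : ∀ i', 1 ≤ n i') (t : ℕ) (ht : t < m)
    (hfin1 : (S m n ℓ c (t + 1)).Finite) :
    Dop m n ℓ c ⟨t, ht⟩ (∑ᶠ x ∈ S m n ℓ c (t + 1), W m n (t + 1) x • lam m n (toL m n x)) =
      ∑ᶠ y ∈ S m n ℓ c t, W m n t y • lam m n (toL m n y) := by
  have hfin0 := S_finite m n ℓ c t ht hfin1
  rw [finsum_mem_eq_finite_toFinset_sum _ hfin1, finsum_mem_eq_finite_toFinset_sum _ hfin0]
  rw [Dop_sum]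
  have hterm : ∀ x ∈ hfin1.toFinset,
      Dop m n ℓ c ⟨t, ht⟩ (W m n (t + 1) x • lam m n (toL m n x)) =
      ∑ z ∈ (Zset_finite m n ℓ c ⟨t, ht⟩ x).toFinset,
        (W m n t (x + embJ m n ⟨t, ht⟩ z)) • lam m n (toL m n (x + embJ m n ⟨t, ht⟩ z)) := by
    intro x hx
    rw [Set.Finite.mem_toFinset] at hx
    rw [Dop_smul, Dop_lam, Dsingle_toL m n ℓ c ⟨t, ht⟩ (hn _) x, Finset.smul_sum]
    apply Finset.sum_congr rfl
    intro z hz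
    rw [smul_smul, toL_add_embJ, W_add_embJ m n ℓ c t ht hx z, mul_comm]
  rw [Finset.sum_congr rfl hterm]
  rw [Finset.sum_sigma']
  refine Finset.sum_nbij' (fun p => p.1 + embJ m n ⟨t, ht⟩ p.2)
      (fun y => ⟨truncB m n t ht y, blockB m n t ht y⟩) ?_ ?_ ?_ ?_ ?_
  · rintro ⟨x, z⟩ hp
    rw [Finset.mem_sigma, Set.Finite.mem_toFinset, Set.Finite.mem_toFinset] at hp
    rw [Set.Finite.mem_toFinset]
    exact mem_S_step_fwd m n ℓ c t ht hp.1 hp.2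
  · intro y hy
    rw [Set.Finite.mem_toFinset] at hy
    obtain ⟨h1, h2⟩ := mem_S_step_bwd m n ℓ c t ht hy
    rw [Finset.mem_sigma, Set.Finite.mem_toFinset, Set.Finite.mem_toFinset]
    exact ⟨h1, h2⟩
  · rintro ⟨x, z⟩ hp
    rw [Finset.mem_sigma, Set.Finite.mem_toFinset, Set.Finite.mem_toFinset] at hp
    obtain ⟨e1, e2⟩ := trunc_of_add m n ℓ c t ht hp.1 z
    exact Sigma.ext e1 (heq_of_eq e2)
  · intro y hy
    exact trunc_add_block m n t ht y
  · rintro ⟨x, z⟩ hp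
    rfl

/-! ### The key induction -/

lemma key (hn : ∀ i, 1 ≤ n i) :
    ∀ d t, t + d = m →
      (S m n ℓ c t).Finite ∧
      ((List.ofFn fun i : Fin m => Dop m n ℓ c i).drop t).foldr (· ∘ ·) id
          (lam m n (E m n (Sum.inr ()))) =
        ∑ᶠ x ∈ S m n ℓ c t, W m n t x • lam m n (toL m n x) := by
  intro d
  induction d with
  | zero =>
    intro t htm
    have ht : t = m := by omega
    rw [ht]
    have hS : S m n ℓ c m = {(0 : J m n → ℤ)} := by
      ext x
      simp only [S, Set.mem_setOf_eq, Set.mem_singleton_iff]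
      constructor
      · rintro ⟨h1, -⟩
        funext p
        exact h1 p p.1.isLt
      · rintro rfl
        exact ⟨fun _ _ => rfl, fun i hi => absurd hi (by have := i.isLt; omega)⟩
    rw [hS]
    refine ⟨Set.finite_singleton _, ?_⟩
    rw [show (List.ofFn fun i : Fin m => Dop m n ℓ c i).drop m = [] from by
      apply List.drop_eq_nil_of_le; simp]
    rw [finsum_mem_singleton]
    have hW : W m n m (0 : J m n → ℤ) = 1 := by
      apply Finset.prod_eq_one
      intro j _
      rw [if_neg]
      rintro ⟨hj, -⟩
      have := j.isLt
      omega
    have htoL : toL m n (0 : J m n → ℤ) = E m n (Sum.inr ()) := by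
      simp [toL]
    rw [hW, htoL, one_smul]
    rfl
  | succ d ih =>
    intro t htm
    have ht : t < m := by omega
    obtain ⟨hfin1, heq1⟩ := ih (t + 1) (by omega)
    refine ⟨S_finite m n ℓ c t ht hfin1, ?_⟩
    have hlen : t < (List.ofFn fun i : Fin m => Dop m n ℓ c i).length := by
      simpa using ht
    rw [List.drop_eq_getElem_cons hlen, List.foldr_cons, List.getElem_ofFn]
    show Dop m n ℓ c _ (((List.ofFn fun i : Fin m => Dop m n ℓ c i).drop (t + 1)).foldr
        (· ∘ ·) id (lam m n (E m n (Sum.inr ())))) = _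
    rw [heq1]
    exact step_sum m n ℓ c hn t ht hfin1

/-! ### Identification with the twisted cube -/

lemma A_cast (x : J m n → ℤ) (i : Fin m) :
    A m n ℓ c (fun p => (x p : ℝ)) i = -((Kf m n ℓ c i x : ℤ) : ℝ) := by
  have h : ((Kf m n ℓ c i x : ℤ) : ℝ)
      = (ℓ i : ℝ) + ∑ j : Fin m, ∑ k : Fin (n j),
          if i < j then (c i j k : ℝ) * ((x ⟨j, k⟩ : ℤ) : ℝ) else 0 := by
    unfold Kf
    push_cast [apply_ite (fun t : ℤ => (t : ℝ))]
    rfl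
  rw [h]
  unfold A
  rfl

lemma mem_C_iff (hn : ∀ i, 1 ≤ n i) (x : J m n → ℤ) :
    ((fun p => (x p : ℝ)) ∈ C m n ℓ c) ↔ x ∈ S m n ℓ c 0 := by
  have hScast : ∀ i : Fin m, (∑ k, ((x ⟨i, k⟩ : ℤ) : ℝ)) = ((∑ k, x ⟨i, k⟩ : ℤ) : ℝ) := by
    intro i; push_cast; ring
  constructor
  · intro hx
    refine ⟨fun p hp => absurd hp (by omega), fun i _ => ?_⟩
    rcases hx i with ⟨h1, h2, h3⟩ | ⟨h1, h2, h3⟩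
    · left
      refine ⟨fun k => by
        have hk : ((x ⟨i, k⟩ : ℤ) : ℝ) ≤ 0 := h3 k
        exact_mod_cast hk, ?_⟩
      rw [A_cast, hScast] at h1
      exact_mod_cast h1
    · right
      refine ⟨fun k => by
        have hk : (0 : ℝ) < ((x ⟨i, k⟩ : ℤ) : ℝ) := h3 k
        exact_mod_cast hk, ?_⟩
      rw [A_cast, hScast] at h2
      have : (∑ k, x ⟨i, k⟩) < -(Kf m n ℓ c i x) := by exact_mod_cast h2
      omega
  · intro hx i
    rcases hx.2 i (Nat.zero_le _) with ⟨h1, h2⟩ | ⟨h1, h2⟩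
    · left
      have hle : (∑ k, x ⟨i, k⟩) ≤ 0 := sum_nonpos_of_nonpos _ h1
      refine ⟨?_, ?_, fun k =>
        show ((x ⟨i, k⟩ : ℤ) : ℝ) ≤ 0 by exact_mod_cast h1 k⟩
      · rw [A_cast, hScast]; exact_mod_cast h2
      · rw [hScast]; exact_mod_cast hle
    · right
      have hnn : (1 : ℤ) ≤ (n i : ℤ) := by exact_mod_cast hn i
      have hgt : (0 : ℤ) < ∑ k, x ⟨i, k⟩ := by
        have := card_le_sum_of_pos _ h1
        omega
      refine ⟨?_, ?_, fun k =>
        show (0 : ℝ) < ((x ⟨i, k⟩ : ℤ) : ℝ) by exact_mod_cast h1 k⟩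
      · rw [hScast]; exact_mod_cast hgt
      · rw [A_cast, hScast]
        have : (∑ k, x ⟨i, k⟩) < -(Kf m n ℓ c i x) := by omega
        exact_mod_cast this

lemma rho_eq_W (hn : ∀ i, 1 ≤ n i) (x : J m n → ℤ) (hx : x ∈ S m n ℓ c 0) :
    rho m n ℓ c (fun p => (x p : ℝ)) = W m n 0 x := by
  have hmem : (fun p => (x p : ℝ)) ∈ C m n ℓ c := (mem_C_iff m n ℓ c hn x).mpr hx
  rw [rho, if_pos hmem]
  have hsgn : ∀ p : J m n, sgnR ((x p : ℤ) : ℝ) = sgnZ (x p) := by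
    intro p
    unfold sgnR sgnZ
    simp [Int.cast_pos]
  rw [show (∏ p : J m n, sgnR ((x p : ℤ) : ℝ)) = ∏ p : J m n, sgnZ (x p) from
    Finset.prod_congr rfl (fun p _ => hsgn p)]
  rw [← Finset.prod_pow_eq_pow_sum]
  rw [← Finset.univ_sigma_univ, Finset.prod_sigma, ← Finset.prod_mul_distrib]
  unfold W
  apply Finset.prod_congr rfl
  intro i _
  rcases hx.2 i (Nat.zero_le _) with ⟨h1, h2⟩ | ⟨h1, h2⟩
  · rw [if_neg]
    · have : ∀ k : Fin (n i), sgnZ (x ⟨i, k⟩) = -1 := by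
        intro k
        unfold sgnZ
        rw [if_neg (by have := h1 k; omega)]
      rw [Finset.prod_congr rfl (fun k _ => this k), Finset.prod_const]
      simp only [Finset.card_univ, Fintype.card_fin]
      rw [← mul_pow]
      norm_num
    · rintro ⟨-, hpos⟩
      have := h1 ⟨0, hn i⟩
      have := hpos ⟨0, hn i⟩
      omega
  · rw [if_pos ⟨Nat.zero_le _, h1⟩]
    have : ∀ k : Fin (n i), sgnZ (x ⟨i, k⟩) = 1 := by
      intro k
      unfold sgnZ
      rw [if_pos (h1 k)]
    rw [Finset.prod_congr rfl (fun k _ => this k), Finset.prod_const]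
    simp

end GBAux
end

/-- `D_1 ⋯ D_m(λ^{e_{m+1}}) = Σ_{x ∈ C ∩ ℤ^N} ρ(x) λ^{x + e_{m+1}}`,
and the set of lattice points of `C` is finite (so the sum has finitely many
nonzero terms). -/
theorem gbott_demazure_eq_density_sum
    (m : ℕ) (hm : 1 ≤ m) (n : Fin m → ℕ) (hn : ∀ i, 1 ≤ n i)
    (ℓ : Fin m → ℤ) (c : (i j : Fin m) → Fin (n j) → ℤ) :
    {x : GB.J m n → ℤ | (fun p => (x p : ℝ)) ∈ GB.C m n ℓ c}.Finite ∧
    (List.ofFn fun i : Fin m => GB.Dop m n ℓ c i).foldr (· ∘ ·) id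
        (GB.lam m n (GB.E m n (Sum.inr ()))) =
      ∑ᶠ x ∈ {x : GB.J m n → ℤ | (fun p => (x p : ℝ)) ∈ GB.C m n ℓ c},
        GB.rho m n ℓ c (fun p => (x p : ℝ)) •
          GB.lam m n (GB.E m n (Sum.inr ()) + ∑ p : GB.J m n, x p • GB.E m n (Sum.inl p)) := by
  have hset : {x : GB.J m n → ℤ | (fun p => (x p : ℝ)) ∈ GB.C m n ℓ c}
      = GBAux.S m n ℓ c 0 := by
    ext x
    exact GBAux.mem_C_iff m n ℓ c hn x
  obtain ⟨hfin, heq⟩ := GBAux.key m n ℓ c hn m 0 (by omega)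
  rw [List.drop_zero] at heq
  constructor
  · rw [hset]; exact hfin
  · rw [hset, heq]
    apply finsum_mem_congr rfl
    intro x hx
    rw [GBAux.rho_eq_W m n ℓ c hn x hx]
    rfl
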